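/- Let d ≥ 1 be an integer and let V : ℤᵈ → ℂ satisfy ∑_{n ∈ ℤᵈ} |V(n)| < ∞, and set H = Δ + V on ℓ²(ℤᵈ). Then the diagonal families (((H² − Δ²)δ_m)(m))_{m ∈ ℤᵈ} and (((H³ − Δ³)δ_m)(m))_{m ∈ ℤᵈ} are summable, and ∑_{m ∈ ℤᵈ} ((H² − Δ²)δ_m)(m) = ∑_{m ∈ ℤᵈ} V(m)², while ∑_{m ∈ ℤᵈ} ((H³ − Δ³)δ_m)(m) = ∑_{m ∈ ℤᵈ} (V(m)³ + (3d/2)·V(m)). -/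

import Mathlib

open MeasureTheory

/-- `L` is the discrete Laplacian on `ℓ²(ℤᵈ)`:
`(Lf)(n) = (1/2)∑_{j=1}^d (f(n+eⱼ) + f(n-eⱼ))`. -/
def IsDiscreteLaplacian (d : ℕ)
    (L : lp (fun _ : Fin d → ℤ => ℂ) 2 →L[ℂ] lp (fun _ : Fin d → ℤ => ℂ) 2) : Prop :=
  ∀ (f : lp (fun _ : Fin d → ℤ => ℂ) 2) (n : Fin d → ℤ),
    L f n = (1 / 2) * ∑ j : Fin d, (f (n + Pi.single j 1) + f (n - Pi.single j 1))

/-- `T` is the operator of multiplication by `V` on `ℓ²(ℤᵈ)`. -/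
def IsMulOp (d : ℕ) (V : (Fin d → ℤ) → ℂ)
    (T : lp (fun _ : Fin d → ℤ => ℂ) 2 →L[ℂ] lp (fun _ : Fin d → ℤ => ℂ) 2) : Prop :=
  ∀ (f : lp (fun _ : Fin d → ℤ => ℂ) 2) (n : Fin d → ℤ), T f n = V n * f n

lemma aux_add_sub_eq {G : Type*} [AddCommGroup G] (m a b : G) : m + a - b = m ↔ a = b := by
  rw [add_sub_assoc, add_eq_left, sub_eq_zero]

lemma aux_sub_add_eq {G : Type*} [AddCommGroup G] (m a b : G) : m - a + b = m ↔ b = a := by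
  rw [sub_add_eq_add_sub, add_sub_assoc, add_eq_left, sub_eq_zero]

lemma aux_add_add_eq {G : Type*} [AddCommGroup G] (m a b : G) : m + a + b = m ↔ a + b = 0 := by
  rw [add_assoc, add_eq_left]

lemma aux_sub_sub_eq {G : Type*} [AddCommGroup G] (m a b : G) : m - a - b = m ↔ a + b = 0 := by
  rw [sub_sub, sub_eq_self]

lemma aux_single_ne_zero (d : ℕ) (j : Fin d) : (Pi.single j (1:ℤ) : Fin d → ℤ) ≠ 0 := by
  intro h
  have := congrFun h j
  simp at this

lemma aux_single_add_ne_zero (d : ℕ) (j k : Fin d) :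
    (Pi.single j (1:ℤ) : Fin d → ℤ) + Pi.single k 1 ≠ 0 := by
  intro h
  have := congrFun h j
  simp only [Pi.add_apply, Pi.single_eq_same, Pi.single_apply, Pi.zero_apply] at this
  split_ifs at this <;> omega

lemma aux_single_inj (d : ℕ) {j k : Fin d}
    (h : (Pi.single j (1:ℤ) : Fin d → ℤ) = Pi.single k 1) : j = k := by
  by_contra hc
  have := congrFun h j
  rw [Pi.single_eq_same, Pi.single_apply, if_neg hc] at this
  exact one_ne_zero this

/-- For `d ≥ 1` and `V ∈ ℓ¹(ℤᵈ)`, with `H = Δ + V`, the diagonal families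
of `H² - Δ²` and `H³ - Δ³` are summable with
`Tr(H² - Δ²) = ∑ V(m)²` and `Tr(H³ - Δ³) = ∑ (V(m)³ + (3d/2)V(m))`. -/
theorem statement9 (d : ℕ) (hd : 1 ≤ d) (V : (Fin d → ℤ) → ℂ)
    (hV : Summable (fun n => ‖V n‖))
    (L T : lp (fun _ : Fin d → ℤ => ℂ) 2 →L[ℂ] lp (fun _ : Fin d → ℤ => ℂ) 2)
    (hL : IsDiscreteLaplacian d L) (hT : IsMulOp d V T) :
    Summable (fun m : Fin d → ℤ => ((L + T) ^ 2 - L ^ 2) (lp.single 2 m (1:ℂ)) m) ∧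
    Summable (fun m : Fin d → ℤ => ((L + T) ^ 3 - L ^ 3) (lp.single 2 m (1:ℂ)) m) ∧
    (∑' m : Fin d → ℤ, ((L + T) ^ 2 - L ^ 2) (lp.single 2 m (1:ℂ)) m)
      = ∑' m : Fin d → ℤ, V m ^ 2 ∧
    (∑' m : Fin d → ℤ, ((L + T) ^ 3 - L ^ 3) (lp.single 2 m (1:ℂ)) m)
      = ∑' m : Fin d → ℤ, (V m ^ 3 + ((3 * d : ℂ) / 2) * V m) := by
  have hT' : ∀ (f : lp (fun _ : Fin d → ℤ => ℂ) 2) (n : Fin d → ℤ), T f n = V n * f n := hT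
  -- pointwise value of the basis vector
  have hδ : ∀ m n : Fin d → ℤ,
      (lp.single 2 m (1:ℂ) : lp (fun _ : Fin d → ℤ => ℂ) 2) n = if n = m then 1 else 0 := by
    intro m n
    rcases eq_or_ne n m with rfl | h
    · simp [lp.single_apply_self]
    · simp [lp.single_apply_ne _ _ _ h, h]
  -- T δ m = V m • δ m
  have hTδ : ∀ m : Fin d → ℤ, T (lp.single 2 m (1:ℂ)) = V m • lp.single 2 m (1:ℂ) := by
    intro m
    apply lp.ext
    funext n
    rw [lp.coeFn_smul, Pi.smul_apply, hT, hδ]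
    rcases eq_or_ne n m with rfl | h
    · simp
    · simp [h]
  -- (L δ m)(m) = 0
  have hLδm : ∀ m : Fin d → ℤ, (L (lp.single 2 m (1:ℂ))) m = 0 := by
    intro m
    have key : ∀ j : Fin d, ((lp.single 2 m (1:ℂ) : lp (fun _ : Fin d → ℤ => ℂ) 2) (m + Pi.single j 1)
        + (lp.single 2 m (1:ℂ) : lp (fun _ : Fin d → ℤ => ℂ) 2) (m - Pi.single j 1)) = (0:ℂ) := by
      intro j
      rw [hδ, hδ, if_neg, if_neg, add_zero]
      · rw [sub_eq_self]; exact aux_single_ne_zero d j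
      · rw [add_eq_left]; exact aux_single_ne_zero d j
    rw [hL, Finset.sum_congr rfl fun j _ => key j]
    simp
  -- (L δ m)(m ± e j) = 1/2
  have hLδp : ∀ (m : Fin d → ℤ) (j : Fin d),
      (L (lp.single 2 m (1:ℂ))) (m + Pi.single j 1) = 1 / 2 := by
    intro m j
    have key : ∀ k : Fin d, ((lp.single 2 m (1:ℂ) : lp (fun _ : Fin d → ℤ => ℂ) 2) (m + Pi.single j 1 + Pi.single k 1)
        + (lp.single 2 m (1:ℂ) : lp (fun _ : Fin d → ℤ => ℂ) 2) (m + Pi.single j 1 - Pi.single k 1))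
        = if k = j then (1:ℂ) else 0 := by
      intro k
      rw [hδ, hδ, if_neg, zero_add]
      · rcases eq_or_ne k j with rfl | h
        · rw [if_pos, if_pos rfl]
          rw [aux_add_sub_eq]
        · rw [if_neg h, if_neg]
          rw [aux_add_sub_eq]
          exact fun hh => h (aux_single_inj d hh).symm
      · rw [aux_add_add_eq]
        exact aux_single_add_ne_zero d j k
    rw [hL, Finset.sum_congr rfl fun k _ => key k,
      Finset.sum_ite_eq' Finset.univ j (fun _ => (1:ℂ))]
    simp
  have hLδq : ∀ (m : Fin d → ℤ) (j : Fin d),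
      (L (lp.single 2 m (1:ℂ))) (m - Pi.single j 1) = 1 / 2 := by
    intro m j
    have key : ∀ k : Fin d, ((lp.single 2 m (1:ℂ) : lp (fun _ : Fin d → ℤ => ℂ) 2) (m - Pi.single j 1 + Pi.single k 1)
        + (lp.single 2 m (1:ℂ) : lp (fun _ : Fin d → ℤ => ℂ) 2) (m - Pi.single j 1 - Pi.single k 1))
        = if k = j then (1:ℂ) else 0 := by
      intro k
      rw [hδ, hδ]
      have h2 : (if m - Pi.single j 1 - Pi.single k 1 = m then (1:ℂ) else 0) = 0 := by
        rw [if_neg]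
        rw [aux_sub_sub_eq]
        exact aux_single_add_ne_zero d j k
      rw [h2, add_zero]
      rcases eq_or_ne k j with rfl | h
      · rw [if_pos, if_pos rfl]
        rw [aux_sub_add_eq]
      · rw [if_neg h, if_neg]
        rw [aux_sub_add_eq]
        exact fun hh => h (aux_single_inj d hh)
    rw [hL, Finset.sum_congr rfl fun k _ => key k,
      Finset.sum_ite_eq' Finset.univ j (fun _ => (1:ℂ))]
    simp
  -- (L L δ m)(m) = d / 2
  have hLLδ : ∀ m : Fin d → ℤ, (L (L (lp.single 2 m (1:ℂ)))) m = (d : ℂ) / 2 := by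
    intro m
    rw [hL, Finset.sum_congr rfl fun j _ => by rw [hLδp, hLδq]]
    simp
    ring
  -- (L T L δ m)(m) = (1/4) ∑ⱼ (V(m+eⱼ) + V(m-eⱼ))
  have hLTL : ∀ m : Fin d → ℤ, (L (T (L (lp.single 2 m (1:ℂ))))) m
      = (1 / 4) * ∑ j : Fin d, (V (m + Pi.single j 1) + V (m - Pi.single j 1)) := by
    intro m
    rw [hL, Finset.sum_congr rfl fun j _ => by rw [hT, hT, hLδp, hLδq]]
    rw [Finset.mul_sum, Finset.mul_sum]
    exact Finset.sum_congr rfl fun j _ => by ring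
  -- diagonal of H² - L²
  have q2 : ∀ m : Fin d → ℤ, ((L + T) ^ 2 - L ^ 2) (lp.single 2 m (1:ℂ)) m = V m ^ 2 := by
    intro m
    have e2 : (L + T) ^ 2 - L ^ 2 = L * T + T * L + T * T := by noncomm_ring
    rw [e2]
    simp only [ContinuousLinearMap.add_apply, ContinuousLinearMap.mul_apply,
      lp.coeFn_add, Pi.add_apply]
    rw [hTδ, _root_.map_smul, lp.coeFn_smul, Pi.smul_apply, smul_eq_mul, hLδm, hT, hLδm,
      hT, lp.coeFn_smul, Pi.smul_apply, smul_eq_mul, hδ]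
    simp
    ring
  -- diagonal of H³ - L³
  have q3 : ∀ m : Fin d → ℤ, ((L + T) ^ 3 - L ^ 3) (lp.single 2 m (1:ℂ)) m
      = V m ^ 3 + (d : ℂ) * V m
        + (1 / 4) * ∑ j : Fin d, (V (m + Pi.single j 1) + V (m - Pi.single j 1)) := by
    intro m
    have e3 : (L + T) ^ 3 - L ^ 3 = L * (L * T) + L * (T * L) + T * (L * L)
        + L * (T * T) + T * (L * T) + T * (T * L) + T * (T * T) := by noncomm_ring
    rw [e3]
    simp only [ContinuousLinearMap.add_apply, ContinuousLinearMap.mul_apply,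
      lp.coeFn_add, Pi.add_apply]
    simp only [hTδ, _root_.map_smul, lp.coeFn_smul, Pi.smul_apply, smul_eq_mul, hT',
      hLδm, hLLδ, hLTL, hδ]
    simp
    ring
  -- summability facts
  have hVs : Summable V := hV.of_norm
  set S : ℝ := ∑' n, ‖V n‖ with hS
  have hbd : ∀ m, ‖V m‖ ≤ S := fun m => Summable.le_tsum hV m fun j _ => norm_nonneg _
  have hS0 : 0 ≤ S := tsum_nonneg fun n => norm_nonneg _
  have hV2 : Summable (fun m => V m ^ 2) := by
    apply Summable.of_norm_bounded (hV.mul_left S)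
    intro m
    rw [norm_pow]
    calc ‖V m‖ ^ 2 = ‖V m‖ * ‖V m‖ := sq ‖V m‖
    _ ≤ S * ‖V m‖ := mul_le_mul_of_nonneg_right (hbd m) (norm_nonneg _)
  have hV3 : Summable (fun m => V m ^ 3) := by
    apply Summable.of_norm_bounded ((hV.mul_left S).mul_left S)
    intro m
    rw [norm_pow]
    have h1 : ‖V m‖ * ‖V m‖ ≤ S * S := mul_le_mul (hbd m) (hbd m) (norm_nonneg _) hS0
    calc ‖V m‖ ^ 3 = ‖V m‖ * ‖V m‖ * ‖V m‖ := by ring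
    _ ≤ S * S * ‖V m‖ := mul_le_mul_of_nonneg_right h1 (norm_nonneg _)
    _ = S * (S * ‖V m‖) := by ring
  have hshiftp : ∀ j : Fin d, Summable (fun m : Fin d → ℤ => V (m + Pi.single j 1)) := fun j =>
    (Equiv.addRight ((Pi.single j 1 : Fin d → ℤ))).summable_iff.mpr hVs
  have hshiftq : ∀ j : Fin d, Summable (fun m : Fin d → ℤ => V (m - Pi.single j 1)) := fun j =>
    (Equiv.subRight ((Pi.single j 1 : Fin d → ℤ))).summable_iff.mpr hVs
  have hsumJ : Summable (fun m : Fin d → ℤ =>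
      (1 / 4 : ℂ) * ∑ j : Fin d, (V (m + Pi.single j 1) + V (m - Pi.single j 1))) :=
    (summable_sum fun j _ => (hshiftp j).add (hshiftq j)).mul_left _
  have hF3 : Summable (fun m : Fin d → ℤ => V m ^ 3 + (d : ℂ) * V m
      + (1 / 4) * ∑ j : Fin d, (V (m + Pi.single j 1) + V (m - Pi.single j 1))) :=
    (hV3.add (hVs.mul_left _)).add hsumJ
  refine ⟨hV2.congr fun m => (q2 m).symm, hF3.congr fun m => (q3 m).symm, ?_, ?_⟩
  · exact tsum_congr q2
  · rw [tsum_congr q3]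
    rw [Summable.tsum_add (hV3.add (hVs.mul_left _)) hsumJ, Summable.tsum_add hV3 (hVs.mul_left _),
      tsum_mul_left, tsum_mul_left, Summable.tsum_finsetSum fun j _ => (hshiftp j).add (hshiftq j)]
    have hJ : ∀ j : Fin d,
        (∑' m : Fin d → ℤ, (V (m + Pi.single j 1) + V (m - Pi.single j 1)))
          = 2 * ∑' m, V m := by
      intro j
      have hp : (∑' m : Fin d → ℤ, V (m + Pi.single j 1)) = ∑' m, V m :=
        (Equiv.addRight ((Pi.single j 1 : Fin d → ℤ))).tsum_eq V
      have hq : (∑' m : Fin d → ℤ, V (m - Pi.single j 1)) = ∑' m, V m :=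
        (Equiv.subRight ((Pi.single j 1 : Fin d → ℤ))).tsum_eq V
      rw [Summable.tsum_add (hshiftp j) (hshiftq j), hp, hq]
      ring
    rw [Finset.sum_congr rfl fun j _ => hJ j, Finset.sum_const, Finset.card_univ,
      Fintype.card_fin, nsmul_eq_mul]
    rw [Summable.tsum_add hV3 (hVs.mul_left _), tsum_mul_left]
    ring
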